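/- Suppose ε_t ≤ 2βG/(λ(2n + b(t - t₀))) for some t ≥ t₀, and ε_{t+1} ≤ (1 - bs/n)ε_t + b(s/n)²(βG)/(2λ) holds with s = 2n/(2n + b(t - t₀)). Then ε_{t+1} ≤ 2βG/(λ(2n + b(t+1 - t₀))). -/

import Mathlib

/-- Inductive step in the SDCA convergence proof: if
`ε_t ≤ 2βG/(λ(2n + b(t-t₀)))` and the per-step recurrence holds with
`s = 2n/(2n + b(t-t₀))`, then `ε_{t+1} ≤ 2βG/(λ(2n + b(t+1-t₀)))`. -/
theorem stmt15 (b n β G lam : ℝ) (hb : 0 < b) (hn : 0 < n) (hβ : 0 < β)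
    (hG : 0 < G) (hlam : 0 < lam) (hbn : b ≤ n)
    (t t0 : ℤ) (ht : t0 ≤ t) (εt εt1 : ℝ)
    (h1 : εt ≤ 2 * β * G / (lam * (2 * n + b * ((t : ℝ) - (t0 : ℝ)))))
    (h2 : εt1 ≤
        (1 - b * (2 * n / (2 * n + b * ((t : ℝ) - (t0 : ℝ)))) / n) * εt
          + b * ((2 * n / (2 * n + b * ((t : ℝ) - (t0 : ℝ)))) / n) ^ 2
              * (β * G) / (2 * lam)) :
    εt1 ≤ 2 * β * G / (lam * (2 * n + b * ((t : ℝ) + 1 - (t0 : ℝ)))) := by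
  have htt : (0:ℝ) ≤ (t : ℝ) - (t0 : ℝ) := by
    have : (t0 : ℝ) ≤ (t : ℝ) := by exact_mod_cast ht
    linarith
  set x : ℝ := 2 * n + b * ((t : ℝ) - (t0 : ℝ)) with hxdef
  have hx2n : 2 * n ≤ x := by nlinarith
  have hxpos : 0 < x := by linarith
  have hne : x ≠ 0 := ne_of_gt hxpos
  have hnne : n ≠ 0 := ne_of_gt hn
  have hcoefeq : 1 - b * (2 * n / x) / n = 1 - 2 * b / x := by
    field_simp
  have hcoef : 0 ≤ 1 - 2 * b / x := by
    rw [sub_nonneg, div_le_one hxpos]; linarith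
  have step : (1 - b * (2 * n / x) / n) * εt ≤
      (1 - 2 * b / x) * (2 * β * G / (lam * x)) := by
    rw [hcoefeq]
    exact mul_le_mul_of_nonneg_left h1 hcoef
  have hxb : 0 < x + b := by linarith
  have key : (1 - 2 * b / x) * (2 * β * G / (lam * x))
      + b * ((2 * n / x) / n) ^ 2 * (β * G) / (2 * lam)
      ≤ 2 * β * G / (lam * (x + b)) := by
    have hsq : (x + b) * (x - b) ≤ x ^ 2 := by nlinarith
    have lhs_eq : (1 - 2 * b / x) * (2 * β * G / (lam * x))
        + b * ((2 * n / x) / n) ^ 2 * (β * G) / (2 * lam)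
        = 2 * β * G * (x - b) / (lam * x ^ 2) := by
      field_simp
      ring
    rw [lhs_eq, div_le_div_iff₀ (by positivity) (by positivity)]
    nlinarith [mul_le_mul_of_nonneg_left hsq
      (le_of_lt (by positivity : (0:ℝ) < 2 * β * G * lam))]
  have htarg : 2 * n + b * ((t : ℝ) + 1 - (t0 : ℝ)) = x + b := by
    rw [hxdef]; ring
  rw [htarg]
  calc εt1 ≤ (1 - b * (2 * n / x) / n) * εt
          + b * ((2 * n / x) / n) ^ 2 * (β * G) / (2 * lam) := h2
    _ ≤ (1 - 2 * b / x) * (2 * β * G / (lam * x))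
          + b * ((2 * n / x) / n) ^ 2 * (β * G) / (2 * lam) := by linarith
    _ ≤ 2 * β * G / (lam * (x + b)) := key
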